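/- Let B ⊆ F_q with B - B ⊆ Q ∪ {0} and |B| = s, and φ(t) = Σ_{b∈B} χ(b - t). Then for every t ∉ B, φ(t) ≡ s (mod 2). -/
import Mathlib


open scoped Classical

/-- The quadratic character: 0 at 0, 1 on nonzero squares, -1 on non-squares. -/
noncomputable def quadChar {F : Type*} [Field F] (x : F) : ℤ :=
  if x = 0 then 0 else if IsSquare x then 1 else -1

theorem stmt_6 {F : Type*} [Field F] [Fintype F]
    (hq : Fintype.card F % 4 = 1) (B : Finset F)
    (hB : ∀ b₁ ∈ B, ∀ b₂ ∈ B, b₁ ≠ b₂ → b₁ - b₂ ≠ 0 ∧ IsSquare (b₁ - b₂))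
    (t : F) (ht : t ∉ B) :
    (∑ b ∈ B, quadChar (b - t)) ≡ (B.card : ℤ) [ZMOD 2] := by
  rw [show (2:ℤ) = ((2:ℕ):ℤ) by norm_num, ← ZMod.intCast_eq_intCast_iff]
  push_cast
  have key : ∀ b ∈ B, ((quadChar (b - t) : ℤ) : ZMod 2) = 1 := by
    intro b hb
    have hbt : b - t ≠ 0 := sub_ne_zero.mpr (fun h => ht (h ▸ hb))
    unfold quadChar
    rw [if_neg hbt]
    split <;> decide
  rw [Finset.sum_congr rfl key]
  simp
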